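/- Let M be an n×n complex matrix (n ≥ 1), b a block assignment, M_D the pinching of M with respect to b, and M_off = M − M_D. Assume M_D is invertible and ρ = ρ(A) < 1 where A = M_D⁻¹ M_off; set c = −n·ln(1 − ρ). Let λ_1,…,λ_n be the eigenvalues of A counted with multiplicity and, for m ≥ 1, let L_m = Σ_{p=1}^m ((−1)^{p−1}/p)·trace(A^p). Then exp(Σ_{i=1}^n Log(1 + λ_i)) = det(M)/det(M_D), and for every m ≥ 1, |Σ_{i=1}^n Log(1 + λ_i) − L_m| ≤ c ρ^m, where Log denotes the principal branch of the complex logarithm. -/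

import Mathlib

open Matrix

/-- The pinching (block diagonal part) of a matrix `M` with respect to a
block assignment `b`. -/
def pinch {n k : ℕ} (b : Fin n → Fin k) (M : Matrix (Fin n) (Fin n) ℂ) :
    Matrix (Fin n) (Fin n) ℂ :=
  fun i j => if b i = b j then M i j else 0

namespace Stmt6Aux

open Polynomial


lemma exp_msum (R : Multiset ℂ) (f : ℂ → ℂ) :
    Complex.exp ((R.map f).sum) = (R.map fun z => Complex.exp (f z)).prod := by
  induction R using Multiset.induction_on with
  | empty => simp
  | cons a s ih => simp [Complex.exp_add, ih]

lemma msum_sub (R : Multiset ℂ) (f g : ℂ → ℂ) :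
    (R.map f).sum - (R.map g).sum = (R.map fun z => f z - g z).sum := by
  induction R using Multiset.induction_on with
  | empty => simp
  | cons a s ih => simp only [Multiset.map_cons, Multiset.sum_cons, ← ih]; ring

lemma msum_swap (s : Finset ℕ) (R : Multiset ℂ) (f : ℕ → ℂ → ℂ) :
    ∑ p ∈ s, (R.map (f p)).sum = (R.map fun z => ∑ p ∈ s, f p z).sum := by
  induction R using Multiset.induction_on with
  | empty => simp
  | cons a t ih => simp [Finset.sum_add_distrib, ih]

lemma msum_norm_le (R : Multiset ℂ) (f : ℂ → ℂ) (B : ℝ)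
    (h : ∀ z ∈ R, ‖f z‖ ≤ B) :
    ‖(R.map f).sum‖ ≤ R.card * B := by
  induction R using Multiset.induction_on with
  | empty => simp
  | cons a t ih =>
    simp only [Multiset.map_cons, Multiset.sum_cons, Multiset.card_cons]
    calc ‖f a + (t.map f).sum‖
        ≤ ‖f a‖ + ‖(t.map f).sum‖ := norm_add_le _ _
      _ ≤ B + t.card * B := by
          gcongr
          · exact h a (Multiset.mem_cons_self a t)
          · exact ih fun z hz => h z (Multiset.mem_cons_of_mem hz)
      _ = (t.card + 1) * B := by ring
      _ = ((t.card + 1 : ℕ) : ℝ) * B := by push_cast; ring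

lemma charpoly_conj {n : ℕ} (U A : Matrix (Fin n) (Fin n) ℂ) (hU : IsUnit U.det) :
    (U⁻¹ * A * U).charpoly = A.charpoly := by
  have h1 : (U⁻¹.map (Polynomial.C : ℂ →+* ℂ[X])) * (U.map Polynomial.C) = 1 := by
    rw [← Matrix.map_mul, Matrix.nonsing_inv_mul U hU]
    simp
  have h2 : (U.map (Polynomial.C : ℂ →+* ℂ[X])) * (U⁻¹.map Polynomial.C) = 1 := by
    rw [← Matrix.map_mul, Matrix.mul_nonsing_inv U hU]
    simp
  have hcm : charmatrix (U⁻¹ * A * U)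
      = (U⁻¹.map Polynomial.C) * charmatrix A * (U.map Polynomial.C) := by
    rw [charmatrix, charmatrix]
    rw [Matrix.mul_sub, Matrix.sub_mul]
    congr 1
    · rw [scalar_apply, ← Matrix.smul_one_eq_diagonal, Matrix.mul_smul, Matrix.mul_one,
        Matrix.smul_mul, h1]
    · rw [RingHom.mapMatrix_apply, RingHom.mapMatrix_apply, ← Matrix.map_mul, ← Matrix.map_mul]
  rw [Matrix.charpoly, hcm, Matrix.det_mul, Matrix.det_mul, mul_comm, ← mul_assoc, ← Matrix.det_mul, h2]
  simp [Matrix.charpoly]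


lemma trace_pow_key : ∀ (n : ℕ) (A : Matrix (Fin n) (Fin n) ℂ) (p : ℕ),
    (A ^ p).trace = ((A.charpoly.roots).map (· ^ p)).sum := by
  intro n
  induction n with
  | zero =>
    intro A p
    have h0 : A.charpoly.roots = 0 := by
      have h := Polynomial.card_roots' A.charpoly
      rw [A.charpoly_natDegree_eq_dim] at h
      simp only [Fintype.card_fin, Nat.le_zero] at h
      exact Multiset.card_eq_zero.mp h
    simp [h0, Matrix.trace]
  | succ n ih =>
    intro A p
    obtain ⟨μ, hμ⟩ := Module.End.exists_eigenvalue (Matrix.toLin' A)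
    obtain ⟨v, hv⟩ := hμ.exists_hasEigenvector
    have hAv : A.mulVec v = μ • v := by
      have h := hv.apply_eq_smul
      simpa [Matrix.toLin'_apply] using h
    obtain ⟨i, hvi⟩ : ∃ i, v i ≠ 0 := by
      by_contra h
      push_neg at h
      exact hv.2 (funext h)
    set U : Matrix (Fin (n+1)) (Fin (n+1)) ℂ := (1 : Matrix _ _ ℂ).updateCol i v with hUdef
    have hdetU : U.det = v i := by
      rw [hUdef, ← Matrix.cramer_apply, Matrix.cramer_one]
      rfl
    have hU : IsUnit U.det := isUnit_iff_ne_zero.mpr (by rw [hdetU]; exact hvi)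
    have hUU : U⁻¹ * U = 1 := Matrix.nonsing_inv_mul U hU
    have hUU' : U * U⁻¹ = 1 := Matrix.mul_nonsing_inv U hU
    set Cm := U⁻¹ * A * U with hCm
    have hUe : U.mulVec (Pi.single i 1) = v := by
      ext a
      rw [Matrix.mulVec_single]
      simp [hUdef, Matrix.updateCol_apply]
    have hcol : ∀ a, Cm a i = if a = i then μ else 0 := by
      have hinv : U⁻¹.mulVec v = Pi.single i 1 := by
        rw [← hUe, Matrix.mulVec_mulVec, hUU, Matrix.one_mulVec]
      have h1 : Cm.mulVec (Pi.single i 1) = μ • (Pi.single i 1 : Fin (n+1) → ℂ) := by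
        rw [hCm, ← Matrix.mulVec_mulVec, ← Matrix.mulVec_mulVec, hUe, hAv,
          Matrix.mulVec_smul, hinv]
      intro a
      have h2 := congrFun h1 a
      rw [Matrix.mulVec_single] at h2
      simpa [Pi.single_apply, mul_comm] using h2
    set D := Cm.submatrix i.succAbove i.succAbove with hD
    have hsa : ∀ a : Fin n, i.succAbove a ≠ i := fun a => Fin.succAbove_ne i a
    have hcsub : (charmatrix Cm).submatrix i.succAbove i.succAbove = charmatrix D := by
      ext a b
      by_cases hab : a = b
      · subst hab
        simp [charmatrix_apply, Matrix.submatrix_apply, hD]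
      · have hne : i.succAbove a ≠ i.succAbove b := by
          simpa [Fin.succAbove_right_inj] using hab
        simp [charmatrix_apply, Matrix.submatrix_apply, hD, Matrix.diagonal_apply_ne _ hab,
          Matrix.diagonal_apply_ne _ hne]
    have hfac : Cm.charpoly = (X - Polynomial.C μ) * D.charpoly := by
      rw [Matrix.charpoly, Matrix.det_succ_column (charmatrix Cm) i]
      rw [Finset.sum_eq_single i]
      · rw [charmatrix_apply_eq, hcsub]
        have hCmii : Cm i i = μ := by rw [hcol i, if_pos rfl]
        have heven : Even ((i : ℕ) + (i : ℕ)) := ⟨i, rfl⟩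
        rw [hCmii, heven.neg_one_pow, one_mul]
        rfl
      · intro b _ hb
        rw [charmatrix_apply_ne _ _ _ hb, hcol b, if_neg hb]
        simp
      · intro h
        exact absurd (Finset.mem_univ i) h
    have hroots : A.charpoly.roots = μ ::ₘ D.charpoly.roots := by
      have hcp : Cm.charpoly = A.charpoly := charpoly_conj U A hU
      rw [← hcp, hfac,
        Polynomial.roots_mul (mul_ne_zero (Polynomial.X_sub_C_ne_zero μ)
          D.charpoly_monic.ne_zero),
        Polynomial.roots_X_sub_C]
      rw [Multiset.singleton_add]
    have hpowcol : ∀ q (a : Fin (n+1)), (Cm ^ q) a i = if a = i then μ ^ q else 0 := by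
      intro q
      induction q with
      | zero => intro a; simp [Matrix.one_apply]
      | succ q ihq =>
        intro a
        rw [pow_succ, Matrix.mul_apply, Finset.sum_eq_single i]
        · rw [ihq a, hcol i, if_pos rfl]
          by_cases ha : a = i <;> simp [ha, pow_succ]
        · intro c _ hc
          rw [hcol c, if_neg hc, mul_zero]
        · intro h; exact absurd (Finset.mem_univ i) h
    have hpowsub : ∀ q (a b : Fin n),
        (Cm ^ q) (i.succAbove a) (i.succAbove b) = (D ^ q) a b := by
      intro q
      induction q with
      | zero =>
        intro a b
        by_cases hab : a = b
        · subst hab; simp [Matrix.one_apply]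
        · have hne : i.succAbove a ≠ i.succAbove b := by
            simpa [Fin.succAbove_right_inj] using hab
          simp [Matrix.one_apply, hab, hne]
      | succ q ihq =>
        intro a b
        rw [pow_succ', Matrix.mul_apply,
          Fin.sum_univ_succAbove
            (fun c => Cm (i.succAbove a) c * (Cm ^ q) c (i.succAbove b)) i]
        rw [hcol, if_neg (hsa a), zero_mul, zero_add, pow_succ', Matrix.mul_apply]
        refine Finset.sum_congr rfl fun c _ => ?_
        rw [ihq c b]
        rfl
    have hCp : Cm ^ p = U⁻¹ * (A ^ p) * U := by
      induction p with
      | zero => simp only [pow_zero, Matrix.mul_one]; rw [hUU]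
      | succ p ihp =>
        have haux : U * (U⁻¹ * (A * U)) = A * U := by
          rw [← Matrix.mul_assoc, hUU', Matrix.one_mul]
        rw [pow_succ, ihp, pow_succ, hCm]
        simp only [Matrix.mul_assoc]
        rw [haux]
    have htr : (Cm ^ p).trace = (A ^ p).trace := by
      rw [hCp]
      exact Matrix.trace_conj' ((Matrix.isUnit_iff_isUnit_det U).mpr hU) _
    rw [← htr, Matrix.trace, Fin.sum_univ_succAbove (fun j => (Cm ^ p).diag j) i]
    have hdsum : ∑ b : Fin n, (Cm ^ p).diag (i.succAbove b) = (D ^ p).trace := by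
      rw [Matrix.trace]
      refine Finset.sum_congr rfl fun b _ => ?_
      exact hpowsub p b b
    rw [Matrix.diag_apply, hpowcol p i, if_pos rfl, hdsum, ih D p, hroots]
    simp


lemma log_taylor_tail {z : ℂ} {ρ : ℝ} (hρ0 : 0 ≤ ρ) (hρ1 : ρ < 1)
    (hz : ‖z‖ ≤ ρ) (m : ℕ) (hm : 1 ≤ m) :
    ‖Complex.log (1 + z) - ∑ p ∈ Finset.Icc 1 m, ((-1 : ℂ) ^ (p - 1) / p) * z ^ p‖
      ≤ ρ ^ m * (-Real.log (1 - ρ)) := by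
  have hz1 : ‖z‖ < 1 := lt_of_le_of_lt hz hρ1
  have hf := Complex.hasSum_taylorSeries_log hz1
  set f : ℕ → ℂ := fun n => (-1) ^ (n + 1) * z ^ n / n with hfdef
  have hpartial : ∑ n ∈ Finset.range (m + 1), f n
      = ∑ p ∈ Finset.Icc 1 m, ((-1 : ℂ) ^ (p - 1) / p) * z ^ p := by
    have hset : Finset.range (m + 1) = insert 0 (Finset.Icc 1 m) := by
      ext x; simp [Nat.lt_succ_iff]; omega
    rw [hset, Finset.sum_insert (by simp)]
    have hf0 : f 0 = 0 := by simp [hfdef]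
    rw [hf0, zero_add]
    refine Finset.sum_congr rfl fun p hp => ?_
    have hp1 : 1 ≤ p := (Finset.mem_Icc.mp hp).1
    obtain ⟨q, rfl⟩ : ∃ q, p = q + 1 := ⟨p - 1, by omega⟩
    show (-1) ^ (q + 1 + 1) * z ^ (q + 1) / ((q + 1 : ℕ) : ℂ)
        = ((-1 : ℂ) ^ (q + 1 - 1) / ((q + 1 : ℕ) : ℂ)) * z ^ (q + 1)
    have he : ((-1 : ℂ)) ^ (q + 1 + 1) = (-1 : ℂ) ^ q := by
      rw [pow_succ, pow_succ]; ring
    rw [he]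
    norm_num
    ring
  have hsum := Summable.sum_add_tsum_nat_add (f := f) (m + 1) hf.summable
  rw [hf.tsum_eq] at hsum
  have hdiff : Complex.log (1 + z)
      - ∑ p ∈ Finset.Icc 1 m, ((-1 : ℂ) ^ (p - 1) / p) * z ^ p
      = ∑' q : ℕ, f (q + (m + 1)) := by
    rw [← hpartial, ← hsum]; ring
  have hρc : ‖(ρ : ℂ)‖ < 1 := by
    rw [Complex.norm_real, Real.norm_eq_abs, abs_of_nonneg hρ0]; exact hρ1
  have hlogC := Complex.hasSum_taylorSeries_neg_log hρc
  have hlogR : HasSum (fun q : ℕ => ρ ^ q / q) (-Real.log (1 - ρ)) := by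
    have h := hlogC.mapL Complex.reCLM
    have h1 : (fun q : ℕ => Complex.reCLM ((ρ : ℂ) ^ q / q)) = fun q : ℕ => ρ ^ q / q := by
      funext q
      have : ((ρ : ℂ) ^ q / (q : ℂ)) = (((ρ ^ q / q : ℝ)) : ℂ) := by push_cast; ring
      rw [Complex.reCLM_apply, this, Complex.ofReal_re]
    have h2 : Complex.reCLM (-Complex.log (1 - (ρ : ℂ))) = -Real.log (1 - ρ) := by
      rw [Complex.reCLM_apply]
      have : (1 : ℂ) - (ρ : ℂ) = ((1 - ρ : ℝ) : ℂ) := by push_cast; ring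
      rw [this, Complex.neg_re, Complex.log_ofReal_re]
    rw [h1, h2] at h
    exact h
  set g : ℕ → ℝ := fun q => ρ ^ q / q with hgdef
  have hgshift : HasSum (fun q => g (q + 1)) (-Real.log (1 - ρ)) := by
    apply (hasSum_nat_add_iff 1).mpr
    simpa [hgdef] using hlogR
  have hgm : HasSum (fun q => ρ ^ m * g (q + 1)) (ρ ^ m * (-Real.log (1 - ρ))) :=
    hgshift.mul_left _
  have hbound : ∀ q : ℕ, ‖f (q + (m + 1))‖ ≤ ρ ^ m * g (q + 1) := by
    intro q
    have h1 : ‖f (q + (m + 1))‖ = ‖z‖ ^ (q + m + 1) / (q + m + 1 : ℕ) := by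
      simp only [hfdef, norm_div, norm_mul, norm_pow, norm_neg, norm_one, one_pow, one_mul,
        Complex.norm_natCast]
      norm_num [show q + (m + 1) = q + m + 1 by omega]
    rw [h1, hgdef]
    have hq1 : (0 : ℝ) < (q + 1 : ℕ) := by positivity
    have hqm1 : (0 : ℝ) < (q + m + 1 : ℕ) := by positivity
    calc (‖z‖ ^ (q + m + 1) / (q + m + 1 : ℕ) : ℝ)
        ≤ ρ ^ (q + m + 1) / (q + m + 1 : ℕ) := by
          gcongr
      _ ≤ ρ ^ (q + m + 1) / (q + 1 : ℕ) := by
          apply div_le_div_of_nonneg_left (by positivity) hq1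
          push_cast; linarith
      _ = ρ ^ m * (ρ ^ (q + 1) / (q + 1 : ℕ)) := by
          rw [show q + m + 1 = m + (q + 1) by omega, pow_add]
          ring
  have hfinal := tsum_of_norm_bounded hgm hbound
  rw [hdiff]
  exact hfinal

end Stmt6Aux

open Polynomial in
/-- **Theorem (logarithm approximation).**
Let `M_D` be the pinching of `M`, `A = M_D⁻¹ M_off` with `ρ = ρ(A) < 1`,
`c = -n ln(1-ρ)`, `λ_1,…,λ_n` the eigenvalues of `A` and
`L_m = Σ_{p=1}^m ((-1)^{p-1}/p) trace(A^p)`. Then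
`exp(Σ_i Log(1+λ_i)) = det M / det M_D` and
`|Σ_i Log(1+λ_i) - L_m| ≤ c ρ^m` for every `m ≥ 1`. -/
theorem stmt6 {n k : ℕ} (hn : 1 ≤ n)
    (M : Matrix (Fin n) (Fin n) ℂ) (b : Fin n → Fin k)
    (MD Moff A : Matrix (Fin n) (Fin n) ℂ)
    (hMD : MD = pinch b M) (hMoff : Moff = M - MD) (hA : A = MD⁻¹ * Moff)
    (hMDinv : IsUnit MD.det)
    (ρ : ℝ)
    (hρub : ∀ μ ∈ A.charpoly.roots, ‖μ‖ ≤ ρ)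
    (hρmax : ∃ μ ∈ A.charpoly.roots, ‖μ‖ = ρ)
    (hρ1 : ρ < 1)
    (c : ℝ) (hc : c = -(n : ℝ) * Real.log (1 - ρ))
    (L : ℕ → ℂ)
    (hL : ∀ m, L m = ∑ p ∈ Finset.Icc 1 m, ((-1 : ℂ) ^ (p - 1) / p) * (A ^ p).trace)
    (S : ℂ) (hS : S = (A.charpoly.roots.map (fun μ => Complex.log (1 + μ))).sum) :
    Complex.exp S = M.det / MD.det ∧
      ∀ m : ℕ, 1 ≤ m → ‖S - L m‖ ≤ c * ρ ^ m := by
  set R := A.charpoly.roots with hR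
  have hmonic := A.charpoly_monic
  have hsplits : A.charpoly.Splits := IsAlgClosed.splits _
  have hcard : R.card = n := by
    rw [hR, Polynomial.splits_iff_card_roots.mp hsplits, A.charpoly_natDegree_eq_dim,
      Fintype.card_fin]
  obtain ⟨μ₀, hμ₀R, hμ₀⟩ := hρmax
  have hρ0 : 0 ≤ ρ := hμ₀ ▸ norm_nonneg _
  have hne : ∀ μ ∈ R, (1 : ℂ) + μ ≠ 0 := by
    intro μ hμ h0
    have hμ1 : μ = -1 := by linear_combination h0 - (1 : ℂ)
    have habs : ‖μ‖ = 1 := by rw [hμ1]; simp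
    have := hρub μ hμ
    rw [habs] at this
    linarith
  constructor
  · rw [hS, Stmt6Aux.exp_msum]
    have hmap : R.map (fun z => Complex.exp (Complex.log (1 + z)))
        = R.map (fun z => 1 + z) :=
      Multiset.map_congr rfl fun μ hμ => Complex.exp_log (hne μ hμ)
    rw [hmap]
    have hdet1A : Matrix.det (1 + A) = (R.map (fun z => 1 + z)).prod := by
      have hfact : A.charpoly = (R.map fun μ => X - Polynomial.C μ).prod :=
        hsplits.eq_prod_roots_of_monic hmonic
      have heval : A.charpoly.eval (-1) = (-1 : ℂ) ^ n * Matrix.det (1 + A) := by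
        have h1 : A.charpoly.eval (-1)
            = ((charmatrix A).map (Polynomial.evalRingHom (-1))).det := by
          rw [Matrix.charpoly]
          have hmd := (Polynomial.evalRingHom (-1 : ℂ)).map_det (charmatrix A)
          simpa [RingHom.mapMatrix_apply] using hmd
        have h2 : (charmatrix A).map (Polynomial.evalRingHom (-1)) = -(1 + A) := by
          ext a b
          by_cases hab : a = b
          · subst hab
            simp [charmatrix_apply, Matrix.one_apply]
            ring
          · simp [charmatrix_apply, Matrix.one_apply, hab, Matrix.diagonal_apply_ne _ hab]
        rw [h1, h2, Matrix.det_neg, Fintype.card_fin]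
      have heval2 : A.charpoly.eval (-1) = (-1 : ℂ) ^ n * (R.map fun z => 1 + z).prod := by
        rw [hfact, Polynomial.eval_multiset_prod, Multiset.map_map]
        have hmap2 : R.map ((Polynomial.eval (-1 : ℂ)) ∘ fun μ => X - Polynomial.C μ)
            = R.map (fun μ => (fun _ : ℂ => (-1 : ℂ)) μ * (fun μ : ℂ => 1 + μ) μ) :=
          Multiset.map_congr rfl fun μ _ => by simp; ring
        rw [hmap2, Multiset.prod_map_mul, Multiset.map_const', Multiset.prod_replicate, hcard]
      have h3 : (-1 : ℂ) ^ n * Matrix.det (1 + A)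
          = (-1 : ℂ) ^ n * (R.map fun z => 1 + z).prod := by rw [← heval, heval2]
      exact mul_left_cancel₀ (pow_ne_zero n (by norm_num : (-1 : ℂ) ≠ 0)) h3
    rw [← hdet1A]
    have hM : M = MD + Moff := by rw [hMoff]; abel
    have h1A : (1 : Matrix (Fin n) (Fin n) ℂ) + A = MD⁻¹ * M := by
      rw [hA, hM, Matrix.mul_add, Matrix.nonsing_inv_mul MD hMDinv]
    rw [h1A, Matrix.det_mul, Matrix.det_nonsing_inv, Ring.inverse_eq_inv]
    rw [div_eq_mul_inv, mul_comm]
  · intro m hm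
    have hLm : L m = (R.map fun μ =>
        ∑ p ∈ Finset.Icc 1 m, ((-1 : ℂ) ^ (p - 1) / p) * μ ^ p).sum := by
      rw [hL m, ← Stmt6Aux.msum_swap]
      refine Finset.sum_congr rfl fun p _ => ?_
      rw [Stmt6Aux.trace_pow_key n A p, ← Multiset.sum_map_mul_left]
    have hSm : S - L m = (R.map fun μ => Complex.log (1 + μ)
        - ∑ p ∈ Finset.Icc 1 m, ((-1 : ℂ) ^ (p - 1) / p) * μ ^ p).sum := by
      rw [hS, hLm, Stmt6Aux.msum_sub]
    rw [hSm]
    have hB : ∀ μ ∈ R, ‖Complex.log (1 + μ)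
        - ∑ p ∈ Finset.Icc 1 m, ((-1 : ℂ) ^ (p - 1) / p) * μ ^ p‖
        ≤ ρ ^ m * (-Real.log (1 - ρ)) :=
      fun μ hμ => Stmt6Aux.log_taylor_tail hρ0 hρ1 (hρub μ hμ) m hm
    have hmain := Stmt6Aux.msum_norm_le R _ (ρ ^ m * (-Real.log (1 - ρ))) hB
    rw [hcard] at hmain
    calc ‖(R.map fun μ => Complex.log (1 + μ)
          - ∑ p ∈ Finset.Icc 1 m, ((-1 : ℂ) ^ (p - 1) / p) * μ ^ p).sum‖
        ≤ n * (ρ ^ m * (-Real.log (1 - ρ))) := hmain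
      _ = c * ρ ^ m := by rw [hc]; ring
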